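/- No minimally nonperfectly divisible diamond-free graph contains a homogeneous set that is a clique of size 2. -/

import Mathlib

open SimpleGraph

variable {V : Type}

/-- The clique number of the subgraph of `G` induced on `S`. -/
noncomputable def omegaOn (G : SimpleGraph V) (S : Set V) : ℕ :=
  sSup {n | ∃ s : Finset V, ↑s ⊆ S ∧ G.IsNClique n s}

/-- The subgraph of `G` induced on `S` is a perfect graph. -/
def IsPerfectOn (G : SimpleGraph V) (S : Set V) : Prop :=
  ∀ T : Set V, T ⊆ S → (G.induce T).chromaticNumber = (omegaOn G T : ℕ∞)

section omegaLemmas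
variable [Fintype V] (G : SimpleGraph V)

omit [Fintype V] in
lemma omegaOn_nonempty (S : Set V) :
    {n | ∃ s : Finset V, ↑s ⊆ S ∧ G.IsNClique n s}.Nonempty :=
  ⟨0, ∅, by simp⟩

lemma omegaOn_bddAbove (S : Set V) :
    BddAbove {n | ∃ s : Finset V, ↑s ⊆ S ∧ G.IsNClique n s} := by
  refine ⟨Fintype.card V, fun n hn => ?_⟩
  obtain ⟨s, _, hs⟩ := hn
  rw [← hs.2]
  exact s.card_le_univ.trans_eq Finset.card_univ

lemma le_omegaOn {S : Set V} {n : ℕ} {s : Finset V} (hsub : ↑s ⊆ S)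
    (hs : G.IsNClique n s) : n ≤ omegaOn G S :=
  le_csSup (omegaOn_bddAbove G S) ⟨s, hsub, hs⟩

lemma omegaOn_mono {S T : Set V} (h : S ⊆ T) : omegaOn G S ≤ omegaOn G T := by
  apply csSup_le (omegaOn_nonempty G S)
  rintro n ⟨s, hsub, hs⟩
  exact le_omegaOn G (hsub.trans h) hs

lemma omegaOn_attained (S : Set V) :
    ∃ s : Finset V, ↑s ⊆ S ∧ G.IsNClique (omegaOn G S) s :=
  Nat.sSup_mem (omegaOn_nonempty G S) (omegaOn_bddAbove G S)

lemma omegaOn_le_chromaticNumber (S : Set V) :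
    (omegaOn G S : ℕ∞) ≤ (G.induce S).chromaticNumber := by
  obtain ⟨s, hsub, hs⟩ := omegaOn_attained G S
  set t : Finset S := s.attach.map
    ⟨fun a => ⟨a.1, hsub a.2⟩, fun a b hab => Subtype.ext (by simpa using hab)⟩ with ht
  have hcard : t.card = omegaOn G S := by
    rw [ht, Finset.card_map, Finset.card_attach, hs.2]
  have hclique : (G.induce S).IsClique ↑t := by
    intro v hv w hw hvw
    simp only [ht, Finset.coe_map, Set.mem_image, Finset.mem_coe, Finset.mem_attach,
      Function.Embedding.coeFn_mk] at hv hw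
    obtain ⟨⟨a, ha⟩, -, rfl⟩ := hv
    obtain ⟨⟨b, hb⟩, -, rfl⟩ := hw
    have hab : a ≠ b := fun h => hvw (by simp [h])
    exact hs.1 ha hb hab
  calc ((omegaOn G S : ℕ) : ℕ∞) = (t.card : ℕ∞) := by rw [hcard]
    _ ≤ _ := hclique.card_le_chromaticNumber

end omegaLemmas

/-- Adding a simplicial vertex to a perfect set keeps it perfect. -/
lemma simplicial_perfect [Fintype V] (G : SimpleGraph V) (y : V)
    (hy : (G.neighborSet y).Pairwise G.Adj) {A : Set V} (hA : IsPerfectOn G A) :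
    IsPerfectOn G (A ∪ {y}) := by
  classical
  intro T hT
  by_cases hyT : y ∈ T
  case neg =>
    refine hA T (fun v hv => ?_)
    rcases hT hv with h | h
    · exact h
    · exact absurd (h ▸ hv) hyT
  case pos =>
  set T' : Set V := T \ {y} with hT'def
  have hT'A : T' ⊆ A := by
    rintro v ⟨hv, hvy⟩
    rcases hT hv with h | h
    · exact h
    · exact absurd h hvy
  have hperf' := hA T' hT'A
  set m := omegaOn G T with hm
  -- the neighbours of y inside T, a clique
  set Nf : Finset V := Finset.univ.filter (fun v => v ∈ T ∧ G.Adj y v) with hNf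
  have hyNf : y ∉ Nf := by simp [hNf]
  have hcl : G.IsNClique (Nf.card + 1) (insert y Nf) := by
    refine IsNClique.insert ⟨?_, rfl⟩ ?_
    · intro u hu w hw huw
      simp only [hNf, Finset.coe_filter, Set.mem_setOf_eq, Finset.mem_coe,
        Finset.mem_univ, true_and] at hu hw
      exact hy hu.2 hw.2 huw
    · intro b hb
      simp only [hNf, Finset.mem_filter, Finset.mem_univ, true_and] at hb
      exact hb.2
  have hsub : ↑(insert y Nf) ⊆ T := by
    intro v hv
    simp only [Finset.coe_insert, Set.mem_insert_iff, Finset.mem_coe] at hv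
    rcases hv with rfl | hv
    · exact hyT
    · simp only [hNf, Finset.mem_filter] at hv; exact hv.2.1
  have hdm : Nf.card + 1 ≤ m := le_omegaOn G hsub hcl
  -- colorability of T with m colours
  have hm' : omegaOn G T' ≤ m := omegaOn_mono G (Set.diff_subset)
  have hcol' : (G.induce T').Colorable m := by
    have : (G.induce T').chromaticNumber ≤ (omegaOn G T' : ℕ∞) := le_of_eq hperf'
    exact (chromaticNumber_le_iff_colorable.mp this).mono hm'
  obtain ⟨C⟩ := hcol'
  set Nf' : Finset T' := Finset.univ.filter (fun w => G.Adj y w.1) with hNf'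
  set S₀ : Finset (Fin m) := Nf'.image C with hS₀
  have hS₀card : S₀.card < m := by
    have h1 : S₀.card ≤ Nf'.card := Finset.card_image_le
    have h2 : Nf'.card ≤ Nf.card := by
      apply Finset.card_le_card_of_injOn (fun w => w.1)
      · intro w hw
        simp only [hNf', Finset.mem_filter, Finset.mem_univ, true_and] at hw
        simp only [hNf, Finset.mem_filter, Finset.mem_univ, true_and]
        exact (Finset.mem_filter.mpr ⟨Finset.mem_univ _, w.2.1, (Finset.mem_filter.mp (hw : w ∈ Nf')).2⟩ : (w : V) ∈ Nf)
      · exact fun a _ b _ h => Subtype.ext h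
    omega
  obtain ⟨c₀, hc₀⟩ : ∃ c₀ : Fin m, c₀ ∉ S₀ := by
    by_contra h
    push_neg at h
    have h2 : (Finset.univ : Finset (Fin m)).card ≤ S₀.card :=
      Finset.card_le_card (fun c _ => h c)
    simp only [Finset.card_univ, Fintype.card_fin] at h2
    omega
  -- build the colouring of T
  have hcolT : (G.induce T).Colorable m := by
    refine ⟨Coloring.mk (fun v => if h : v.1 = y then c₀
      else C ⟨v.1, ⟨v.2, h⟩⟩) ?_⟩
    rintro ⟨v, hv⟩ ⟨w, hw⟩ hadj
    have hadj' : G.Adj v w := hadj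
    by_cases hvy : v = y <;> by_cases hwy : w = y
    · exact absurd (hvy ▸ hwy ▸ hadj') (G.irrefl)
    · simp only [dif_pos hvy, dif_neg hwy]
      intro hcc
      apply hc₀
      rw [hcc]
      apply Finset.mem_image_of_mem
      simp only [hNf', Finset.mem_filter, Finset.mem_univ, true_and]
      exact hvy ▸ hadj'
    · simp only [dif_pos hwy, dif_neg hvy]
      intro hcc
      apply hc₀
      rw [← hcc]
      apply Finset.mem_image_of_mem
      simp only [hNf', Finset.mem_filter, Finset.mem_univ, true_and]
      exact hwy ▸ hadj'.symm
    · simp only [dif_neg hvy, dif_neg hwy]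
      exact C.valid (show (G.induce T').Adj ⟨v, _⟩ ⟨w, _⟩ from hadj')
  refine le_antisymm ?_ (omegaOn_le_chromaticNumber G T)
  exact hcolT.chromaticNumber_le

/-- Every nonempty induced subgraph of `G[S]` admits a perfect division. -/
def PerfDivOn (G : SimpleGraph V) (S : Set V) : Prop :=
  ∀ H : Set V, H ⊆ S → H.Nonempty →
    ∃ A B : Set V, A ∪ B = H ∧ Disjoint A B ∧
      IsPerfectOn G A ∧ omegaOn G B < omegaOn G H

/-- `G` is minimally nonperfectly divisible. -/
def MNPD (G : SimpleGraph V) : Prop :=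
  ¬ PerfDivOn G Set.univ ∧ ∀ S : Set V, S ≠ Set.univ → PerfDivOn G S

/-- The external neighbourhood `N(X)`. -/
def extNbhd (G : SimpleGraph V) (X : Set V) : Set V :=
  {v | v ∉ X ∧ ∃ x ∈ X, G.Adj v x}

/-- `G` has no induced diamond (`K₄` minus an edge). -/
def DiamondFree (G : SimpleGraph V) : Prop :=
  ¬ ∃ a b c d : V, [a, b, c, d].Nodup ∧
    G.Adj a b ∧ G.Adj a c ∧ G.Adj a d ∧ G.Adj b c ∧ G.Adj b d ∧ ¬ G.Adj c d

theorem stmt_18 [Fintype V] (G : SimpleGraph V) (hfree : DiamondFree G)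
    (hG : MNPD G) :
    ¬ ∃ x y : V, x ≠ y ∧ G.Adj x y ∧ (∃ z : V, z ≠ x ∧ z ≠ y) ∧
      (∀ v : V, v ≠ x → v ≠ y →
        ((G.Adj v x ∧ G.Adj v y) ∨ (¬ G.Adj v x ∧ ¬ G.Adj v y))) := by
  rintro ⟨x, y, hxy, hadj, ⟨z, hzx, hzy⟩, hhom⟩
  -- every neighbour of y other than x is a common neighbour of x and y
  have hcommon : ∀ u : V, G.Adj y u → u ≠ x → G.Adj u x ∧ G.Adj u y := by
    intro u hu hux
    rcases hhom u hux hu.ne' with h | h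
    · exact h
    · exact absurd hu.symm h.2
  -- y is a simplicial vertex
  have hy : (G.neighborSet y).Pairwise G.Adj := by
    intro u hu w hw huw
    have hu' : G.Adj y u := hu
    have hw' : G.Adj y w := hw
    by_cases hux : u = x
    · by_cases hwx : w = x
      · exact absurd (hux.trans hwx.symm) huw
      · rw [hux]
        exact ((hcommon w hw' hwx).1).symm
    · by_cases hwx : w = x
      · rw [hwx]
        exact (hcommon u hu' hux).1
      · by_contra hno
        obtain ⟨hu1, hu2⟩ := hcommon u hu' hux
        obtain ⟨hw1, hw2⟩ := hcommon w hw' hwx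
        refine hfree ⟨x, y, u, w, ?_, hadj, hu1.symm, hw1.symm, hu', hw', hno⟩
        simp only [List.nodup_cons, List.mem_cons, List.not_mem_nil, or_false,
          List.mem_singleton, List.nodup_nil, and_true, not_or]
        exact ⟨⟨hxy, fun h => hux h.symm, fun h => hwx h.symm⟩,
          ⟨hu'.ne, hw'.ne⟩, huw, not_false⟩
  -- contradiction with MNPD: G would be perfectly divisible
  apply hG.1
  intro H hH hne
  by_cases hHuniv : H = Set.univ
  · subst hHuniv
    have hSne : (Set.univ \ {y} : Set V) ≠ Set.univ := by
      intro h
      have hmem : y ∈ (Set.univ \ {y} : Set V) := by rw [h]; trivial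
      simp at hmem
    obtain ⟨A, B, hAB, hdisj, hA, hB⟩ :=
      hG.2 _ hSne (Set.univ \ {y}) subset_rfl ⟨x, Set.mem_univ x, by simp [hxy]⟩
    refine ⟨A ∪ {y}, B, ?_, ?_, simplicial_perfect G y hy hA, ?_⟩
    · ext v
      simp only [Set.mem_union, Set.mem_singleton_iff, Set.mem_univ, iff_true]
      by_cases hv : v = y
      · tauto
      · have hv2 : v ∈ A ∪ B := by rw [hAB]; exact ⟨Set.mem_univ v, hv⟩
        rcases hv2 with h | h <;> tauto
    · rw [Set.disjoint_union_left]
      refine ⟨hdisj, ?_⟩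
      rw [Set.disjoint_singleton_left]
      intro hyB
      have hmem : y ∈ A ∪ B := Or.inr hyB
      rw [hAB] at hmem
      exact hmem.2 rfl
    · exact lt_of_lt_of_le hB (omegaOn_mono G (Set.subset_univ _))
  · exact hG.2 H hHuniv H subset_rfl hne
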